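/- Let β > 0, k₀ > 0, and k = k₀ + l·e^{iπ/6} for l ≥ 0. Then Re(2i(16βk⁵ - 80βk₀⁴·k)) = -16βl²(l³ + 5√3 k₀l² + 20k₀²l + 10√3 k₀³), and in particular Re(2i(16βk⁵ - 80βk₀⁴k)) ≤ -16β|k - k₀|⁵. -/

import Mathlib

open Real

/-- Along the ray k = k₀ + l e^{iπ/6}, l ≥ 0, the real part of
θ(k) = 2i(16βk⁵ - 80βk₀⁴k) equals -16βl²(l³ + 5√3 k₀l² + 20k₀²l + 10√3 k₀³),
and in particular is at most -16β|k - k₀|⁵. -/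
theorem stmt3 (β k₀ l : ℝ) (hβ : 0 < β) (hk₀ : 0 < k₀) (hl : 0 ≤ l)
    (k : ℂ) (hk : k = (k₀ : ℂ) + (l : ℂ) * Complex.exp (Complex.I * (Real.pi / 6))) :
    (2 * Complex.I * (16 * (β : ℂ) * k ^ 5 - 80 * (β : ℂ) * (k₀ : ℂ) ^ 4 * k)).re =
      -16 * β * l ^ 2 * (l ^ 3 + 5 * Real.sqrt 3 * k₀ * l ^ 2 + 20 * k₀ ^ 2 * l
        + 10 * Real.sqrt 3 * k₀ ^ 3) ∧
    (2 * Complex.I * (16 * (β : ℂ) * k ^ 5 - 80 * (β : ℂ) * (k₀ : ℂ) ^ 4 * k)).re ≤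
      -16 * β * ‖k - (k₀ : ℂ)‖ ^ 5 := by
  have hs3 : Real.sqrt 3 ^ 2 = 3 := Real.sq_sqrt (by norm_num)
  have hs3n : (0:ℝ) ≤ Real.sqrt 3 := Real.sqrt_nonneg 3
  have hexp : Complex.exp (Complex.I * (Real.pi / 6)) =
      Complex.ofReal (Real.sqrt 3 / 2) + Complex.ofReal (1/2) * Complex.I := by
    rw [mul_comm, Complex.exp_mul_I]
    have h1 : Complex.cos (Real.pi / 6 : ℝ) = Complex.ofReal (Real.sqrt 3 / 2) := by
      rw [show ((Real.pi / 6 : ℝ) : ℂ) = ((Real.pi/6 : ℝ) : ℂ) from rfl, ← Complex.ofReal_cos,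
        Real.cos_pi_div_six]
    have h2 : Complex.sin (Real.pi / 6 : ℝ) = Complex.ofReal (1 / 2) := by
      rw [← Complex.ofReal_sin, Real.sin_pi_div_six]
    push_cast at h1 h2 ⊢
    rw [h1, h2]
  have hre : k.re = k₀ + l * (Real.sqrt 3 / 2) := by
    rw [hk, hexp]; simp
  have him : k.im = l / 2 := by
    rw [hk, hexp]; simp; ring
  have heq : (2 * Complex.I * (16 * (β : ℂ) * k ^ 5 - 80 * (β : ℂ) * (k₀ : ℂ) ^ 4 * k)).re =
      -16 * β * l ^ 2 * (l ^ 3 + 5 * Real.sqrt 3 * k₀ * l ^ 2 + 20 * k₀ ^ 2 * l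
        + 10 * Real.sqrt 3 * k₀ ^ 3) := by
    simp only [pow_succ, pow_zero, one_mul, Complex.mul_re, Complex.mul_im,
      Complex.sub_re, Complex.sub_im, Complex.I_re, Complex.I_im, Complex.ofReal_re,
      Complex.ofReal_im, Complex.re_ofNat, Complex.im_ofNat, hre, him]
    linear_combination (β * (-5 * l ^ 5 * Real.sqrt 3 ^ 2 - 40 * k₀ * l ^ 4 * Real.sqrt 3
      - 120 * k₀ ^ 2 * l ^ 3 - 5 * l ^ 5)) * hs3
  refine ⟨heq, ?_⟩
  have habs : ‖k - (k₀ : ℂ)‖ = l := by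
    rw [hk]
    simp [Complex.norm_exp, abs_of_nonneg hl]
  rw [heq, habs]
  have h1 : 0 ≤ β * (Real.sqrt 3 * (k₀ * l ^ 4)) := by positivity
  have h2 : 0 ≤ β * (k₀ ^ 2 * l ^ 3) := by positivity
  have h3 : 0 ≤ β * (Real.sqrt 3 * (k₀ ^ 3 * l ^ 2)) := by positivity
  nlinarith [h1, h2, h3]
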